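/- The Hilbert polynomial of S/I_Γ(d), where I_Γ(d) is the Stanley-Reisner-type ideal ⟨x_1x_3,...,x_1x_{d-1}⟩ + ⟨x_ix_jx_k : 2 ≤ i<j<k ≤ d−1⟩ in k[x_1,...,x_d], equals C(d−3,2)·C(t,2) + (d−3)·C(t+1,2) + C(t+2,2), which simplifies to ((d²−5d+8)/4)t² − ((d²−9d+12)/4)t + 1. -/

import Mathlib

open MvPolynomial Finsupp

namespace Stmt10

def tri (n : ℕ) : Finset (ℕ × ℕ) :=
  (Finset.range (n+1) ×ˢ Finset.range (n+1)).filter fun p => p.1 + p.2 ≤ n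

lemma mem_tri {n : ℕ} {p : ℕ × ℕ} : p ∈ tri n ↔ p.1 + p.2 ≤ n := by
  simp only [tri, Finset.mem_filter, Finset.mem_product, Finset.mem_range]
  omega

lemma tri_card (n : ℕ) : (tri n).card = (n+2).choose 2 := by
  induction n with
  | zero => decide
  | succ n ih =>
    have hu : tri (n+1) = tri n ∪ Finset.HasAntidiagonal.antidiagonal (n+1) := by
      ext p
      simp only [mem_tri, Finset.mem_union, Finset.HasAntidiagonal.mem_antidiagonal]
      omega
    have hdisj : Disjoint (tri n) (Finset.HasAntidiagonal.antidiagonal (n+1)) := by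
      rw [Finset.disjoint_left]
      intro p hp hp'
      rw [mem_tri] at hp
      rw [Finset.HasAntidiagonal.mem_antidiagonal] at hp'
      omega
    rw [hu, Finset.card_union_of_disjoint hdisj, ih, Finset.Nat.card_antidiagonal,
      Nat.choose_succ_succ (n+2) 1]
    simp [Nat.choose_one_right]
    omega

def stdCond (d : ℕ) (m : Fin d →₀ ℕ) : Prop :=
  (∀ i₀ i : Fin d, (i₀ : ℕ) = 0 → 2 ≤ (i : ℕ) → (i : ℕ) ≤ d - 2 → m i₀ = 0 ∨ m i = 0) ∧
  (∀ i j l : Fin d, 1 ≤ (i : ℕ) → (i : ℕ) < (j : ℕ) → (j : ℕ) < (l : ℕ) → (l : ℕ) ≤ d - 2 →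
    m i = 0 ∨ m j = 0 ∨ m l = 0)

instance (d : ℕ) : DecidablePred (stdCond d) := fun _ => by
  unfold stdCond; infer_instance

noncomputable def baseSet (d t : ℕ) : Finset (Fin d →₀ ℕ) :=
  (Fintype.piFinset fun _ : Fin d => Finset.range (t+1)).map
    ⟨Finsupp.equivFunOnFinite.symm, Finsupp.equivFunOnFinite.symm.injective⟩

lemma mem_baseSet {d t : ℕ} {m : Fin d →₀ ℕ} : m ∈ baseSet d t ↔ ∀ i, m i ≤ t := by
  simp only [baseSet, Finset.mem_map, Function.Embedding.coeFn_mk, Fintype.mem_piFinset,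
    Finset.mem_range]
  constructor
  · rintro ⟨f, hf, rfl⟩ i
    have := hf i
    simpa [Nat.lt_succ_iff] using this
  · intro h
    exact ⟨⇑m, fun i => Nat.lt_succ_of_le (h i), Finsupp.equivFunOnFinite_symm_coe m⟩

lemma degree_eq_sum {d : ℕ} (m : Fin d →₀ ℕ) : m.degree = ∑ i, m i := by
  rw [Finsupp.degree]
  exact Finset.sum_subset (Finset.subset_univ _)
    (fun x _ hx => Finsupp.notMem_support_iff.mp hx)

lemma mem_base_of_degree {d t : ℕ} {m : Fin d →₀ ℕ} (h : m.degree = t) : m ∈ baseSet d t :=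
  mem_baseSet.mpr fun i => h ▸ Finsupp.le_degree i m

noncomputable def stdSet (d t : ℕ) : Finset (Fin d →₀ ℕ) :=
  (baseSet d t).filter (fun m => m.degree = t ∧ stdCond d m)

lemma mem_stdSet {d t : ℕ} {m : Fin d →₀ ℕ} :
    m ∈ stdSet d t ↔ m.degree = t ∧ stdCond d m := by
  simp only [stdSet, Finset.mem_filter, and_iff_right_iff_imp]
  exact fun h => mem_base_of_degree h.1

noncomputable def cellSet (d t : ℕ) (u v w : Fin d) (eu ev ew : ℕ) : Finset (Fin d →₀ ℕ) :=
  (baseSet d t).filter (fun m => m.degree = t ∧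
    (∀ x, x ≠ u → x ≠ v → x ≠ w → m x = 0) ∧ eu ≤ m u ∧ ev ≤ m v ∧ ew ≤ m w)

lemma mem_cellSet {d t : ℕ} {u v w : Fin d} {eu ev ew : ℕ} {m : Fin d →₀ ℕ} :
    m ∈ cellSet d t u v w eu ev ew ↔ m.degree = t ∧
      (∀ x, x ≠ u → x ≠ v → x ≠ w → m x = 0) ∧ eu ≤ m u ∧ ev ≤ m v ∧ ew ≤ m w := by
  simp only [cellSet, Finset.mem_filter, and_iff_right_iff_imp]
  exact fun h => mem_base_of_degree h.1

lemma sum_three {d : ℕ} {u v w : Fin d} (huv : u ≠ v) (huw : u ≠ w) (hvw : v ≠ w)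
    (m : Fin d →₀ ℕ) (hz : ∀ x, x ≠ u → x ≠ v → x ≠ w → m x = 0) :
    m.degree = m u + m v + m w := by
  rw [degree_eq_sum]
  have h1 : (Finset.univ : Finset (Fin d)).sum m = ∑ x ∈ ({u, v, w} : Finset (Fin d)), m x := by
    refine (Finset.sum_subset (Finset.subset_univ _) ?_).symm
    intro x _ hx
    simp only [Finset.mem_insert, Finset.mem_singleton, not_or] at hx
    exact hz x hx.1 hx.2.1 hx.2.2
  rw [h1, Finset.sum_insert (by simp [huv, huw]), Finset.sum_pair hvw]
  ring

lemma cell_card {d t : ℕ} {u v w : Fin d} {eu ev ew : ℕ} (huv : u ≠ v) (huw : u ≠ w)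
    (hvw : v ≠ w) (hσ : eu + ev + ew ≤ t) :
    (cellSet d t u v w eu ev ew).card = (t - (eu + ev + ew) + 2).choose 2 := by
  classical
  rw [← tri_card]
  set σ := eu + ev + ew with hσdef
  set J : ℕ × ℕ → (Fin d →₀ ℕ) := fun p => Finsupp.equivFunOnFinite.symm
    (fun x => if x = u then p.1 + eu else if x = v then p.2 + ev
      else if x = w then t - σ - p.1 - p.2 + ew else 0) with hJ
  have hJval : ∀ p x, J p x = (if x = u then p.1 + eu else if x = v then p.2 + ev
      else if x = w then t - σ - p.1 - p.2 + ew else 0) := fun p x => rfl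
  apply Finset.card_nbij' (i := fun m => (m u - eu, m v - ev)) (j := J)
  · intro m hm
    rw [Finset.mem_coe, mem_cellSet] at hm
    obtain ⟨hdeg, hz, h1, h2, h3⟩ := hm
    have := sum_three huv huw hvw m hz
    rw [Finset.mem_coe, mem_tri]
    dsimp only
    omega
  · intro p hp
    rw [Finset.mem_coe, mem_tri] at hp
    have hzz : ∀ x, x ≠ u → x ≠ v → x ≠ w → J p x = 0 := by
      intro x hxu hxv hxw
      rw [hJval, if_neg hxu, if_neg hxv, if_neg hxw]
    rw [Finset.mem_coe, mem_cellSet]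
    have hu' : J p u = p.1 + eu := by rw [hJval, if_pos rfl]
    have hv' : J p v = p.2 + ev := by
      rw [hJval, if_neg (Ne.symm huv), if_pos rfl]
    have hw' : J p w = t - σ - p.1 - p.2 + ew := by
      rw [hJval, if_neg (Ne.symm huw), if_neg (Ne.symm hvw), if_pos rfl]
    refine ⟨?_, hzz, ?_, ?_, ?_⟩
    · rw [sum_three huv huw hvw _ hzz, hu', hv', hw']; omega
    · rw [hu']; omega
    · rw [hv']; omega
    · rw [hw']; omega
  · intro m hm
    rw [Finset.mem_coe, mem_cellSet] at hm
    obtain ⟨hdeg, hz, h1, h2, h3⟩ := hm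
    have hsum := sum_three huv huw hvw m hz
    ext x
    rw [hJval]
    rcases eq_or_ne x u with rfl | hxu
    · rw [if_pos rfl]; dsimp only; omega
    rw [if_neg hxu]
    rcases eq_or_ne x v with rfl | hxv
    · rw [if_pos rfl]; dsimp only; omega
    rw [if_neg hxv]
    rcases eq_or_ne x w with rfl | hxw
    · rw [if_pos rfl]; dsimp only; omega
    · rw [if_neg hxw]
      exact (hz x hxu hxv hxw).symm
  · intro p hp
    rw [Finset.mem_coe, mem_tri] at hp
    have hu' : J p u = p.1 + eu := by rw [hJval, if_pos rfl]
    have hv' : J p v = p.2 + ev := by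
      rw [hJval, if_neg (Ne.symm huv), if_pos rfl]
    ext
    · dsimp only; rw [hu']; omega
    · dsimp only; rw [hv']; omega


variable {d : ℕ}

def Bset (d : ℕ) : Finset (Fin d) :=
  Finset.univ.filter (fun i => 2 ≤ (i : ℕ) ∧ (i : ℕ) ≤ d - 2)

lemma mem_Bset {i : Fin d} : i ∈ Bset d ↔ 2 ≤ (i : ℕ) ∧ (i : ℕ) ≤ d - 2 := by
  simp [Bset]

lemma card_Bset (hd : 4 ≤ d) : (Bset d).card = d - 3 := by
  have : Bset d = Finset.Icc ⟨2, by omega⟩ ⟨d - 2, by omega⟩ := by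
    ext i
    simp only [mem_Bset, Finset.mem_Icc, Fin.le_def]
  rw [this, Fin.card_Icc]
  simp
  omega

def Pset (d : ℕ) : Finset (Fin d × Fin d) :=
  ((Bset d) ×ˢ (Bset d)).filter (fun p => (p.1 : ℕ) < (p.2 : ℕ))

def Qset (d : ℕ) : Finset (Fin d × Fin d) :=
  ((Bset d) ×ˢ (Bset d)).filter (fun p => (p.2 : ℕ) < (p.1 : ℕ))

lemma mem_Pset {p : Fin d × Fin d} :
    p ∈ Pset d ↔ (2 ≤ (p.1 : ℕ) ∧ (p.1 : ℕ) ≤ d - 2) ∧ (2 ≤ (p.2 : ℕ) ∧ (p.2 : ℕ) ≤ d - 2)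
      ∧ (p.1 : ℕ) < (p.2 : ℕ) := by
  simp [Pset, Finset.mem_filter, Finset.mem_product, mem_Bset, and_assoc]

lemma mul_pred_eq (k : ℕ) : k * (k - 1) = k * k - k := by
  cases k with
  | zero => simp
  | succ m => rw [Nat.succ_sub_one, Nat.mul_succ, Nat.add_sub_cancel]

lemma card_Pset (hd : 4 ≤ d) : (Pset d).card = (d - 3).choose 2 := by
  have hPQ : (Pset d).card = (Qset d).card := by
    apply Finset.card_nbij' (i := Prod.swap) (j := Prod.swap)
    · intro p hp
      simp only [Finset.mem_coe, Pset, Finset.mem_filter, Finset.mem_product] at hp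
      simp only [Finset.mem_coe, Qset, Finset.mem_filter, Finset.mem_product, Prod.fst_swap, Prod.snd_swap]
      exact ⟨⟨hp.1.2, hp.1.1⟩, hp.2⟩
    · intro p hp
      simp only [Finset.mem_coe, Qset, Finset.mem_filter, Finset.mem_product] at hp
      simp only [Finset.mem_coe, Pset, Finset.mem_filter, Finset.mem_product, Prod.fst_swap, Prod.snd_swap]
      exact ⟨⟨hp.1.2, hp.1.1⟩, hp.2⟩
    · intro p _; exact Prod.swap_swap p
    · intro p _; exact Prod.swap_swap p
  have hunion : Pset d ∪ Qset d = (Bset d).offDiag := by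
    ext p
    simp only [Finset.mem_union, Pset, Qset, Finset.mem_filter, Finset.mem_product,
      Finset.mem_offDiag, ne_eq, Fin.ext_iff]
    constructor
    · rintro (⟨⟨h1, h2⟩, h3⟩ | ⟨⟨h1, h2⟩, h3⟩) <;> exact ⟨h1, h2, by omega⟩
    · rintro ⟨h1, h2, h3⟩
      rcases Nat.lt_trichotomy (p.1 : ℕ) (p.2 : ℕ) with h | h | h
      · exact Or.inl ⟨⟨h1, h2⟩, h⟩
      · exact absurd h h3
      · exact Or.inr ⟨⟨h1, h2⟩, h⟩
  have hdisj : Disjoint (Pset d) (Qset d) := by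
    rw [Finset.disjoint_left]
    intro p hp hq
    simp only [Pset, Finset.mem_filter] at hp
    simp only [Qset, Finset.mem_filter] at hq
    omega
  have hcard : (Pset d).card + (Qset d).card = (Bset d).card * (Bset d).card - (Bset d).card := by
    rw [← Finset.card_union_of_disjoint hdisj, hunion, Finset.offDiag_card]
  have h2P : (Pset d).card * 2 = (d - 3) * (d - 4) := by
    calc (Pset d).card * 2 = (Pset d).card + (Qset d).card := by omega
    _ = (Bset d).card * (Bset d).card - (Bset d).card := hcard
    _ = (d - 3) * (d - 3) - (d - 3) := by rw [card_Bset hd]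
    _ = (d - 3) * (d - 4) := by rw [← mul_pred_eq, Nat.sub_sub]
  rw [Nat.choose_two_right]
  have h34 : d - 3 - 1 = d - 4 := by omega
  rw [h34, ← h2P]
  omega

lemma vne {a b : Fin d} (h : (a : ℕ) ≠ (b : ℕ)) : a ≠ b := fun e => h (congrArg Fin.val e)

lemma partition (hd : 4 ≤ d) (t : ℕ) {z o w : Fin d} (hz0 : (z : ℕ) = 0) (ho1 : (o : ℕ) = 1)
    (hw1 : (w : ℕ) = d - 1) :
    stdSet d t =
      (cellSet d t z o w 0 0 0 ∪
        (Bset d).biUnion (fun i => cellSet d t o i w 0 1 0)) ∪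
      (Pset d).biUnion (fun p => cellSet d t p.1 p.2 w 1 1 0) := by
  ext m
  simp only [Finset.mem_union, Finset.mem_biUnion]
  constructor
  · intro hm
    rw [mem_stdSet] at hm
    obtain ⟨hdeg, h1, h2⟩ := hm
    have h2' : ∀ i j l : Fin d, (i : ℕ) ≠ (j : ℕ) → (i : ℕ) ≠ (l : ℕ) → (j : ℕ) ≠ (l : ℕ) →
        1 ≤ (i : ℕ) → (i : ℕ) ≤ d - 2 → 1 ≤ (j : ℕ) → (j : ℕ) ≤ d - 2 →
        1 ≤ (l : ℕ) → (l : ℕ) ≤ d - 2 → m i = 0 ∨ m j = 0 ∨ m l = 0 := by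
      intro i j l hij hil hjl h1i hid h1j hjd h1l hld
      rcases Nat.lt_trichotomy (i : ℕ) (j : ℕ) with hij' | hij' | hij'
      · rcases Nat.lt_trichotomy (j : ℕ) (l : ℕ) with hjl' | hjl' | hjl'
        · exact h2 i j l h1i hij' hjl' hld
        · omega
        · rcases Nat.lt_trichotomy (i : ℕ) (l : ℕ) with hil' | hil' | hil'
          · have := h2 i l j h1i hil' (by omega) hjd; tauto
          · omega
          · have := h2 l i j h1l hil' hij' hjd; tauto
      · omega
      · rcases Nat.lt_trichotomy (j : ℕ) (l : ℕ) with hjl' | hjl' | hjl'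
        · rcases Nat.lt_trichotomy (i : ℕ) (l : ℕ) with hil' | hil' | hil'
          · have := h2 j i l h1j hij' hil' hld; tauto
          · omega
          · have := h2 j l i h1j hjl' hil' hid; tauto
        · omega
        · have := h2 l j i h1l hjl' hij' hid; tauto
    set F : Finset (Fin d) := m.support.filter (fun i => 2 ≤ (i : ℕ) ∧ (i : ℕ) ≤ d - 2) with hF
    have hFm : ∀ i : Fin d, i ∈ F ↔ m i ≠ 0 ∧ 2 ≤ (i : ℕ) ∧ (i : ℕ) ≤ d - 2 := by
      intro i; simp [hF, Finsupp.mem_support_iff]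
    by_cases hc2 : ∃ i ∈ F, ∃ j ∈ F, (i : ℕ) < (j : ℕ)
    · obtain ⟨i, hi, j, hj, hij⟩ := hc2
      rw [hFm] at hi hj
      right
      refine ⟨(i, j), mem_Pset.mpr ⟨⟨hi.2.1, hi.2.2⟩, ⟨hj.2.1, hj.2.2⟩, hij⟩, ?_⟩
      rw [mem_cellSet]
      dsimp only
      have hmi := hi.1
      have hmj := hj.1
      refine ⟨hdeg, ?_, by omega, by omega, Nat.zero_le _⟩
      intro x hxi hxj hxw
      by_contra hmx
      have hxd : (x : ℕ) < d := x.isLt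
      rcases Nat.lt_or_ge (x : ℕ) 2 with hx2 | hx2
      · rcases Nat.lt_or_ge (x : ℕ) 1 with hx1 | hx1
        · have := h1 x i (by omega) hi.2.1 hi.2.2
          tauto
        · have := h2 x i j (by omega) (by omega) hij hj.2.2
          tauto
      · rcases Nat.lt_or_ge (x : ℕ) (d - 1) with hxd1 | hxd1
        · have := h2' x i j (fun e => hxi (Fin.ext e)) (fun e => hxj (Fin.ext e))
            (by omega) (by omega) (by omega) (by omega) (by omega) (by omega) (by omega)
          tauto
        · exact hxw (Fin.ext (by omega))
    · by_cases hc1 : ∃ i, i ∈ F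
      · obtain ⟨i, hi⟩ := hc1
        have hi' := (hFm i).mp hi
        have hmi := hi'.1
        left; right
        refine ⟨i, mem_Bset.mpr ⟨hi'.2.1, hi'.2.2⟩, ?_⟩
        rw [mem_cellSet]
        refine ⟨hdeg, ?_, Nat.zero_le _, by omega, Nat.zero_le _⟩
        intro x hxo hxi hxw
        by_contra hmx
        have hxd : (x : ℕ) < d := x.isLt
        rcases Nat.lt_or_ge (x : ℕ) 2 with hx2 | hx2
        · rcases Nat.lt_or_ge (x : ℕ) 1 with hx1 | hx1
          · have := h1 x i (by omega) hi'.2.1 hi'.2.2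
            tauto
          · exact hxo (Fin.ext (by omega))
        · rcases Nat.lt_or_ge (x : ℕ) (d - 1) with hxd1 | hxd1
          · have hxF : x ∈ F := (hFm x).mpr ⟨hmx, by omega, by omega⟩
            rcases Nat.lt_trichotomy (x : ℕ) (i : ℕ) with h | h | h
            · exact hc2 ⟨x, hxF, i, hi, h⟩
            · exact hxi (Fin.ext h)
            · exact hc2 ⟨i, hi, x, hxF, h⟩
          · exact hxw (Fin.ext (by omega))
      · left; left
        rw [mem_cellSet]
        refine ⟨hdeg, ?_, Nat.zero_le _, Nat.zero_le _, Nat.zero_le _⟩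
        intro x hxz hxo hxw
        by_contra hmx
        have hxd : (x : ℕ) < d := x.isLt
        rcases Nat.lt_or_ge (x : ℕ) 2 with hx2 | hx2
        · rcases Nat.lt_or_ge (x : ℕ) 1 with hx1 | hx1
          · exact hxz (Fin.ext (by omega))
          · exact hxo (Fin.ext (by omega))
        · rcases Nat.lt_or_ge (x : ℕ) (d - 1) with hxd1 | hxd1
          · exact hc1 ⟨x, (hFm x).mpr ⟨hmx, by omega, by omega⟩⟩
          · exact hxw (Fin.ext (by omega))
  · rintro ((h | ⟨i, hiB, h⟩) | ⟨p, hpP, h⟩) <;> rw [mem_cellSet] at h <;> rw [mem_stdSet]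
    · obtain ⟨hdeg, hzz, -⟩ := h
      refine ⟨hdeg, ?_, ?_⟩
      · intro i₀ i h0 h2i hid
        exact Or.inr (hzz i (vne (by omega)) (vne (by omega)) (vne (by omega)))
      · intro i j l h1i hij hjl hld
        have hjd : (j : ℕ) < d := j.isLt
        exact Or.inr (Or.inl (hzz j (vne (by omega)) (vne (by omega)) (vne (by omega))))
    · rw [mem_Bset] at hiB
      obtain ⟨hdeg, hzz, -⟩ := h
      refine ⟨hdeg, ?_, ?_⟩
      · intro i₀ i' h0 h2i hid
        exact Or.inl (hzz i₀ (vne (by omega)) (vne (by omega)) (vne (by omega)))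
      · intro a b c h1a hab hbc hcd
        by_cases hbi : (b : ℕ) = (i : ℕ)
        · exact Or.inr (Or.inr (hzz c (vne (by omega)) (vne (by omega)) (vne (by omega))))
        · exact Or.inr (Or.inl (hzz b (vne (by omega)) (vne (by omega)) (vne (by omega))))
    · rw [mem_Pset] at hpP
      obtain ⟨hp1, hp2, hp12⟩ := hpP
      obtain ⟨hdeg, hzz, -⟩ := h
      refine ⟨hdeg, ?_, ?_⟩
      · intro i₀ i' h0 h2i hid
        exact Or.inl (hzz i₀ (vne (by omega)) (vne (by omega)) (vne (by omega)))
      · intro a b c h1a hab hbc hcd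
        by_cases hb1 : (b : ℕ) = (p.1 : ℕ)
        · exact Or.inl (hzz a (vne (by omega)) (vne (by omega)) (vne (by omega)))
        · by_cases hb2 : (b : ℕ) = (p.2 : ℕ)
          · exact Or.inr (Or.inr (hzz c (vne (by omega)) (vne (by omega)) (vne (by omega))))
          · exact Or.inr (Or.inl (hzz b (vne (by omega)) (vne (by omega)) (vne (by omega))))

lemma card_stdSet (hd : 4 ≤ d) {t : ℕ} (ht : 2 ≤ t) :
    (stdSet d t).card =
      (d - 3).choose 2 * t.choose 2 + (d - 3) * (t + 1).choose 2 + (t + 2).choose 2 := by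
  obtain ⟨z, hz0⟩ : ∃ z : Fin d, (z : ℕ) = 0 := ⟨⟨0, by omega⟩, rfl⟩
  obtain ⟨o, ho1⟩ : ∃ o : Fin d, (o : ℕ) = 1 := ⟨⟨1, by omega⟩, rfl⟩
  obtain ⟨w, hw1⟩ : ∃ w : Fin d, (w : ℕ) = d - 1 := ⟨⟨d - 1, by omega⟩, rfl⟩
  rw [partition hd t hz0 ho1 hw1]
  have hD1 : Disjoint (cellSet d t z o w 0 0 0)
      ((Bset d).biUnion fun i => cellSet d t o i w 0 1 0) := by
    rw [Finset.disjoint_left]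
    intro m hm hm'
    rw [Finset.mem_biUnion] at hm'
    obtain ⟨i, hiB, hmi⟩ := hm'
    rw [mem_Bset] at hiB
    rw [mem_cellSet] at hm hmi
    have h0 : m i = 0 := hm.2.1 i (vne (by omega)) (vne (by omega)) (vne (by omega))
    have h1 := hmi.2.2.2.1
    omega
  have hD2 : Disjoint (cellSet d t z o w 0 0 0 ∪
      (Bset d).biUnion fun i => cellSet d t o i w 0 1 0)
      ((Pset d).biUnion fun p => cellSet d t p.1 p.2 w 1 1 0) := by
    rw [Finset.disjoint_left]
    intro m hm hm'
    rw [Finset.mem_biUnion] at hm'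
    obtain ⟨p, hpP, hmp⟩ := hm'
    rw [mem_Pset] at hpP
    rw [mem_cellSet] at hmp
    obtain ⟨-, hzp, hp1, hp2, -⟩ := hmp
    rw [Finset.mem_union] at hm
    rcases hm with hm | hm
    · rw [mem_cellSet] at hm
      have h0 : m p.1 = 0 := hm.2.1 p.1 (vne (by omega)) (vne (by omega)) (vne (by omega))
      omega
    · rw [Finset.mem_biUnion] at hm
      obtain ⟨i, hiB, hmi⟩ := hm
      rw [mem_Bset] at hiB
      rw [mem_cellSet] at hmi
      by_cases he1 : (p.1 : ℕ) = (i : ℕ)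
      · have h0 : m p.2 = 0 := hmi.2.1 p.2 (vne (by omega)) (vne (by omega)) (vne (by omega))
        omega
      · have h0 : m p.1 = 0 := hmi.2.1 p.1 (vne (by omega)) (vne (by omega)) (vne (by omega))
        omega
  have hD3 : ∀ i ∈ Bset d, ∀ j ∈ Bset d, i ≠ j →
      Disjoint (cellSet d t o i w 0 1 0) (cellSet d t o j w 0 1 0) := by
    intro i hi j hj hij
    rw [mem_Bset] at hi hj
    rw [Finset.disjoint_left]
    intro m hm hm'
    rw [mem_cellSet] at hm hm'
    have hvij : (i : ℕ) ≠ (j : ℕ) := fun e => hij (Fin.ext e)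
    have h0 : m i = 0 := hm'.2.1 i (vne (by omega)) (vne (by omega)) (vne (by omega))
    have h1 := hm.2.2.2.1
    omega
  have hD4 : ∀ p ∈ Pset d, ∀ q ∈ Pset d, p ≠ q →
      Disjoint (cellSet d t p.1 p.2 w 1 1 0) (cellSet d t q.1 q.2 w 1 1 0) := by
    intro p hp q hq hpq
    rw [mem_Pset] at hp hq
    rw [Finset.disjoint_left]
    intro m hm hm'
    rw [mem_cellSet] at hm hm'
    obtain ⟨-, hzp, hp1, hp2, -⟩ := hm
    obtain ⟨-, hzq, hq1, hq2, -⟩ := hm'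
    have hne : (p.1 : ℕ) ≠ (q.1 : ℕ) ∨ (p.2 : ℕ) ≠ (q.2 : ℕ) := by
      by_contra hcon
      push_neg at hcon
      exact hpq (Prod.ext (Fin.ext hcon.1) (Fin.ext hcon.2))
    by_cases he1 : (p.1 : ℕ) = (q.1 : ℕ)
    · have h0 : m p.2 = 0 := hzq p.2 (vne (by omega)) (vne (by omega)) (vne (by omega))
      omega
    · by_cases he2 : (p.1 : ℕ) = (q.2 : ℕ)
      · have h0 : m p.2 = 0 := hzq p.2 (vne (by omega)) (vne (by omega)) (vne (by omega))
        omega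
      · have h0 : m p.1 = 0 := hzq p.1 (vne (by omega)) (vne (by omega)) (vne (by omega))
        omega
  rw [Finset.card_union_of_disjoint hD2, Finset.card_union_of_disjoint hD1,
    Finset.card_biUnion hD3, Finset.card_biUnion hD4]
  have hcA : (cellSet d t z o w 0 0 0).card = (t + 2).choose 2 := by
    have := cell_card (d := d) (t := t) (u := z) (v := o) (w := w) (eu := 0) (ev := 0) (ew := 0)
      (vne (by omega)) (vne (by omega)) (vne (by omega)) (show 0 + 0 + 0 ≤ t by omega)
    simpa using this
  have hcB : ∑ i ∈ Bset d, (cellSet d t o i w 0 1 0).card = (d - 3) * (t + 1).choose 2 := by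
    rw [Finset.sum_congr rfl (fun i hi => ?_), Finset.sum_const, card_Bset hd, smul_eq_mul]
    rw [mem_Bset] at hi
    have := cell_card (d := d) (t := t) (u := o) (v := i) (w := w) (eu := 0) (ev := 1) (ew := 0)
      (vne (by omega)) (vne (by omega)) (vne (by omega)) (show 0 + 1 + 0 ≤ t by omega)
    have ht1 : t - (0 + 1 + 0) + 2 = t + 1 := by omega
    rw [ht1] at this
    exact this
  have hcP : ∑ p ∈ Pset d, (cellSet d t p.1 p.2 w 1 1 0).card =
      (d - 3).choose 2 * t.choose 2 := by
    rw [Finset.sum_congr rfl (fun p hp => ?_), Finset.sum_const, card_Pset hd, smul_eq_mul]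
    rw [mem_Pset] at hp
    have := cell_card (d := d) (t := t) (u := p.1) (v := p.2) (w := w) (eu := 1) (ev := 1) (ew := 0)
      (vne (by omega)) (vne (by omega)) (vne (by omega)) (show 1 + 1 + 0 ≤ t by omega)
    have ht1 : t - (1 + 1 + 0) + 2 = t := by omega
    rw [ht1] at this
    exact this
  rw [hcA, hcB, hcP]
  ring

def genSet (d : ℕ) (hd : 4 ≤ d) (k : Type*) [Field k] : Set (MvPolynomial (Fin d) k) :=
  {p | ∃ i : Fin d, 2 ≤ (i : ℕ) ∧ (i : ℕ) ≤ d - 2 ∧ p = X ⟨0, Nat.lt_of_lt_of_le (by norm_num) hd⟩ * X i} ∪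
  {p | ∃ i j l : Fin d, 1 ≤ (i : ℕ) ∧ (i : ℕ) < (j : ℕ) ∧ (j : ℕ) < (l : ℕ) ∧
      (l : ℕ) ≤ d - 2 ∧ p = X i * X j * X l}

/-- bad patterns of exponents -/
def badPat (d : ℕ) (e : Fin d →₀ ℕ) : Prop :=
  (∃ i₀ i : Fin d, (i₀ : ℕ) = 0 ∧ 2 ≤ (i : ℕ) ∧ (i : ℕ) ≤ d - 2 ∧
    e = Finsupp.single i₀ 1 + Finsupp.single i 1) ∨
  (∃ i j l : Fin d, 1 ≤ (i : ℕ) ∧ (i : ℕ) < (j : ℕ) ∧ (j : ℕ) < (l : ℕ) ∧ (l : ℕ) ≤ d - 2 ∧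
    e = Finsupp.single i 1 + Finsupp.single j 1 + Finsupp.single l 1)

lemma X_mul_X_eq {k : Type*} [Field k] (a b : Fin d) :
    (X a * X b : MvPolynomial (Fin d) k) =
      monomial (Finsupp.single a 1 + Finsupp.single b 1) 1 := by
  rw [X, X, monomial_mul, one_mul]

lemma X_mul_X_mul_X_eq {k : Type*} [Field k] (a b c : Fin d) :
    (X a * X b * X c : MvPolynomial (Fin d) k) =
      monomial (Finsupp.single a 1 + Finsupp.single b 1 + Finsupp.single c 1) 1 := by
  rw [X, X, X, monomial_mul, monomial_mul, one_mul]
  norm_num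

lemma gen_monomial {k : Type*} [Field k] (hd : 4 ≤ d) {g : MvPolynomial (Fin d) k}
    (hg : g ∈ genSet d hd k) : ∃ e, badPat d e ∧ g = monomial e 1 := by
  rcases hg with ⟨i, h2, hld, rfl⟩ | ⟨i, j, l, h1, hij, hjl, hld, rfl⟩
  · exact ⟨_, Or.inl ⟨⟨0, by omega⟩, i, rfl, h2, hld, rfl⟩, X_mul_X_eq _ _⟩
  · exact ⟨_, Or.inr ⟨i, j, l, h1, hij, hjl, hld, rfl⟩, X_mul_X_mul_X_eq _ _ _⟩

lemma two_single_apply {a b x : Fin d} (hab : a ≠ b) (n m : ℕ) :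
    (Finsupp.single a n + Finsupp.single b m) x =
      if x = a then n else if x = b then m else 0 := by
  rw [Finsupp.add_apply, Finsupp.single_apply, Finsupp.single_apply]
  split_ifs <;> subst_vars <;> first | omega | exact absurd rfl hab

lemma three_single_apply {a b c x : Fin d} (hab : a ≠ b) (hac : a ≠ c) (hbc : b ≠ c)
    (n m p : ℕ) :
    (Finsupp.single a n + Finsupp.single b m + Finsupp.single c p) x =
      if x = a then n else if x = b then m else if x = c then p else 0 := by
  rw [Finsupp.add_apply, two_single_apply hab, Finsupp.single_apply]
  split_ifs <;> subst_vars <;>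
    first | omega | exact absurd rfl hab | exact absurd rfl hac | exact absurd rfl hbc

lemma std_not_le {m e : Fin d →₀ ℕ} (hm : stdCond d m) (he : badPat d e) : ¬ e ≤ m := by
  intro hle
  rw [Finsupp.le_def] at hle
  rcases he with ⟨i₀, i, h0, h2, hld, rfl⟩ | ⟨i, j, l, h1, hij, hjl, hld, rfl⟩
  · have hne : i₀ ≠ i := vne (by omega)
    have hv0 := hle i₀
    have hvi := hle i
    rw [two_single_apply hne] at hv0 hvi
    rw [if_pos rfl] at hv0
    rw [if_neg (vne (by omega)), if_pos rfl] at hvi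
    have := hm.1 i₀ i h0 h2 hld
    omega
  · have hvi := hle i
    have hvj := hle j
    have hvl := hle l
    have hij' : i ≠ j := vne (by omega)
    have hil' : i ≠ l := vne (by omega)
    have hjl' : j ≠ l := vne (by omega)
    rw [three_single_apply hij' hil' hjl', if_pos rfl] at hvi
    rw [three_single_apply hij' hil' hjl', if_neg (vne (show (j:ℕ) ≠ (i:ℕ) by omega)),
      if_pos rfl] at hvj
    rw [three_single_apply hij' hil' hjl', if_neg (vne (show (l:ℕ) ≠ (i:ℕ) by omega)),
      if_neg (vne (show (l:ℕ) ≠ (j:ℕ) by omega)), if_pos rfl] at hvl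
    have := hm.2 i j l h1 hij hjl hld
    omega

lemma nonstd_le {m : Fin d →₀ ℕ} (hd : 4 ≤ d) (hm : ¬ stdCond d m) :
    ∃ e, badPat d e ∧ e ≤ m := by
  rw [stdCond, not_and_or] at hm
  rcases hm with hA | hB
  · push_neg at hA
    obtain ⟨i₀, i, h0, h2, hld, hm0, hmi⟩ := hA
    have hne : i₀ ≠ i := vne (by omega)
    refine ⟨Finsupp.single i₀ 1 + Finsupp.single i 1,
      Or.inl ⟨i₀, i, h0, h2, hld, rfl⟩, ?_⟩
    rw [Finsupp.le_def]
    intro x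
    rw [two_single_apply hne]
    split_ifs with h1 h2
    · subst h1; omega
    · subst h2; omega
    · omega
  · push_neg at hB
    obtain ⟨i, j, l, h1, hij, hjl, hld, hmi, hmj, hml⟩ := hB
    refine ⟨Finsupp.single i 1 + Finsupp.single j 1 + Finsupp.single l 1,
      Or.inr ⟨i, j, l, h1, hij, hjl, hld, rfl⟩, ?_⟩
    have hij' : i ≠ j := vne (by omega)
    have hil' : i ≠ l := vne (by omega)
    have hjl' : j ≠ l := vne (by omega)
    rw [Finsupp.le_def]
    intro x
    rw [three_single_apply hij' hil' hjl']
    split_ifs with h1 h2 h3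
    · subst h1; omega
    · subst h2; omega
    · subst h3; omega
    · omega

lemma coeff_zero_of_mem {k : Type*} [Field k] (hd : 4 ≤ d) {q : MvPolynomial (Fin d) k}
    (hq : q ∈ Ideal.span (genSet d hd k)) {m : Fin d →₀ ℕ} (hm : stdCond d m) :
    coeff m q = 0 := by
  classical
  have key : ∀ mm ∈ q.support, ∃ e, badPat d e ∧ e ≤ mm := by
    refine Submodule.span_induction ?_ ?_ ?_ ?_ hq
    · intro g hg mm hmm
      obtain ⟨e, hbad, rfl⟩ := gen_monomial hd hg
      rw [support_monomial, if_neg one_ne_zero, Finset.mem_singleton] at hmm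
      exact ⟨e, hbad, hmm ▸ le_refl e⟩
    · intro mm hmm
      simp at hmm
    · intro a b _ _ ha hb mm hmm
      rcases Finset.mem_union.mp (MvPolynomial.support_add hmm) with h | h
      · exact ha mm h
      · exact hb mm h
    · intro r q _ hq mm hmm
      rw [smul_eq_mul] at hmm
      have := support_mul r q hmm
      rw [Finset.mem_add] at this
      obtain ⟨a, ha, b, hb, hab⟩ := this
      obtain ⟨e, hbad, hle⟩ := hq b hb
      exact ⟨e, hbad, hle.trans (hab ▸ le_add_self)⟩
  by_contra hc
  obtain ⟨e, hbad, hle⟩ := key m (MvPolynomial.mem_support_iff.mpr hc)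
  exact std_not_le hm hbad hle

lemma nonstd_mem {k : Type*} [Field k] (hd : 4 ≤ d) {m : Fin d →₀ ℕ} (hm : ¬ stdCond d m)
    (c : k) : monomial m c ∈ Ideal.span (genSet d hd k) := by
  obtain ⟨e, hbad, hle⟩ := nonstd_le hd hm
  have hg : monomial e (1 : k) ∈ genSet d hd k := by
    rcases hbad with ⟨i₀, i, h0, h2, hld, rfl⟩ | ⟨i, j, l, h1, hij, hjl, hld, rfl⟩
    · left
      refine ⟨i, h2, hld, ?_⟩
      obtain rfl : i₀ = ⟨0, Nat.lt_of_lt_of_le (by norm_num) hd⟩ := Fin.ext h0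
      exact (X_mul_X_eq _ _).symm
    · exact Or.inr ⟨i, j, l, h1, hij, hjl, hld, (X_mul_X_mul_X_eq _ _ _).symm⟩
  have : monomial m c = monomial e 1 * monomial (m - e) c := by
    rw [monomial_mul, one_mul, add_tsub_cancel_of_le hle]
  rw [this]
  exact Ideal.mul_mem_right _ _ (Ideal.subset_span hg)

lemma finrank_eq {k : Type*} [Field k] (hd : 4 ≤ d) (t : ℕ) :
    Module.finrank k ((homogeneousSubmodule (Fin d) k t).map
      (Ideal.Quotient.mkₐ k (Ideal.span (genSet d hd k))).toLinearMap) =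
    (stdSet d t).card := by
  classical
  set I := Ideal.span (genSet d hd k) with hIdef
  set φ := (Ideal.Quotient.mkₐ k I).toLinearMap with hφ
  have hφapp : ∀ p, φ p = Ideal.Quotient.mk I p := fun p => rfl
  set b : {x // x ∈ stdSet d t} → MvPolynomial (Fin d) k ⧸ I :=
    fun m => φ (monomial (m : Fin d →₀ ℕ) (1 : k)) with hb
  have hli : LinearIndependent k b := by
    rw [linearIndependent_iff']
    intro s g hsum i₀ hi₀
    set q : MvPolynomial (Fin d) k := ∑ i ∈ s, monomial (i : Fin d →₀ ℕ) (g i) with hq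
    have hmk : φ q = 0 := by
      rw [hq, map_sum, ← hsum]
      refine Finset.sum_congr rfl fun i _ => ?_
      rw [hb]
      have : monomial (i : Fin d →₀ ℕ) (g i) = g i • monomial (i : Fin d →₀ ℕ) (1 : k) := by
        rw [smul_monomial, smul_eq_mul, mul_one]
      rw [this, map_smul]
    have hqI : q ∈ I := by
      rw [← Ideal.Quotient.eq_zero_iff_mem, ← hφapp, hmk]
    have hstd : stdCond d (i₀ : Fin d →₀ ℕ) := (mem_stdSet.mp i₀.2).2
    have hco := coeff_zero_of_mem hd (hIdef ▸ hqI) hstd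
    rw [hq, coeff_sum] at hco
    rw [Finset.sum_eq_single_of_mem i₀ hi₀ ?_] at hco
    · rwa [coeff_monomial, if_pos rfl] at hco
    · intro j _ hji
      rw [coeff_monomial, if_neg (fun h => hji (Subtype.ext h))]
  have hspan : Submodule.map φ (homogeneousSubmodule (Fin d) k t) =
      Submodule.span k (Set.range b) := by
    apply le_antisymm
    · rintro x ⟨p, hp, rfl⟩
      rw [SetLike.mem_coe, mem_homogeneousSubmodule] at hp
      rw [← support_sum_monomial_coeff p, map_sum]
      apply Submodule.sum_mem
      intro m hm
      by_cases hstd : stdCond d m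
      · have hdeg : m.degree = t := by
          have := hp (MvPolynomial.mem_support_iff.mp hm)
          rw [Finsupp.degree_eq_weight_one]
          exact this
        have hmem : m ∈ stdSet d t := mem_stdSet.mpr ⟨hdeg, hstd⟩
        have : monomial m (coeff m p) = (coeff m p) • monomial m (1:k) := by
          rw [smul_monomial, smul_eq_mul, mul_one]
        rw [this, map_smul]
        exact Submodule.smul_mem _ _ (Submodule.subset_span ⟨⟨m, hmem⟩, rfl⟩)
      · have h0 : φ (monomial m (coeff m p)) = 0 := by
          rw [hφapp, Ideal.Quotient.eq_zero_iff_mem]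
          exact nonstd_mem hd hstd _
        rw [h0]
        exact Submodule.zero_mem _
    · rw [Submodule.span_le]
      rintro x ⟨m, rfl⟩
      refine ⟨monomial (m : Fin d →₀ ℕ) 1, ?_, rfl⟩
      rw [SetLike.mem_coe, mem_homogeneousSubmodule]
      exact isHomogeneous_monomial 1 (mem_stdSet.mp m.2).1
  rw [hspan, finrank_span_eq_card hli, Fintype.card_coe]

end Stmt10

/-- Variables `X 0, …, X (d-1)` correspond to `x_1, …, x_d`. -/
theorem stmt10 (d : ℕ) (hd : 4 ≤ d) (k : Type*) [Field k]
    (I : Ideal (MvPolynomial (Fin d) k))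
    (hI : I = Ideal.span
      ({p | ∃ i : Fin d, 2 ≤ (i : ℕ) ∧ (i : ℕ) ≤ d - 2 ∧ p = X ⟨0, by omega⟩ * X i} ∪
       {p | ∃ i j l : Fin d, 1 ≤ (i : ℕ) ∧ (i : ℕ) < (j : ℕ) ∧ (j : ℕ) < (l : ℕ) ∧
          (l : ℕ) ≤ d - 2 ∧ p = X i * X j * X l})) :
    (∃ N : ℕ, ∀ t : ℕ, N ≤ t →
      (Module.finrank k ((MvPolynomial.homogeneousSubmodule (Fin d) k t).map
          (Ideal.Quotient.mkₐ k I).toLinearMap))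
        = Nat.choose (d - 3) 2 * Nat.choose t 2 + (d - 3) * Nat.choose (t + 1) 2
            + Nat.choose (t + 2) 2) ∧
    ∀ t : ℕ, (Nat.choose (d - 3) 2 : ℚ) * Nat.choose t 2
        + ((d : ℚ) - 3) * Nat.choose (t + 1) 2 + Nat.choose (t + 2) 2
      = (((d : ℚ) ^ 2 - 5 * d + 8) / 4) * t ^ 2 - (((d : ℚ) ^ 2 - 9 * d + 12) / 4) * t + 1 := by
  constructor
  · refine ⟨2, fun t ht => ?_⟩
    have hI' : I = Ideal.span (Stmt10.genSet d hd k) := hI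
    rw [hI', Stmt10.finrank_eq hd t, Stmt10.card_stdSet hd ht]
  · intro t
    have h3 : ((d - 3 : ℕ) : ℚ) = (d : ℚ) - 3 := by
      have : (3 : ℕ) ≤ d := by omega
      push_cast [this]; ring
    simp only [Nat.cast_choose_two]
    rw [h3]
    push_cast
    ring
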